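/- Let {Mₙ} be i.i.d. positive random variables, Πₙ = M₁⋯Mₙ, and suppose E[f(|Z_∞|)] < ∞ for a nondegenerate perpetuity Z_∞ with f nondecreasing and subadditive. Suppose there exist ρ ∈ (0,1) with κ := P(|M| > ρ) > 0 and the tail bounds P(sup_{k≥0}|Π_{2k}| > x) ≤ 8 P(|Z_∞| > cx) for all x > 0 and some c ∈ (0,1). Then P(sup_{k≥0}|Π_k| > 2x) ≤ (1 + κ⁻¹) P(sup_{k≥0}|Π_{2k}| > ρx) for all x > 0, and consequently E[f(sup_{n≥0}|Πₙ|)] < ∞. -/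

import Mathlib

open MeasureTheory ProbabilityTheory Set Real Filter
open scoped ProbabilityTheory ENNReal Topology

lemma aux_indep {Ω : Type*} [MeasureSpace Ω] [IsProbabilityMeasure (ℙ : Measure Ω)]
    (M : ℕ → Ω → ℝ) (hMmeas : ∀ n, Measurable (M n))
    (hindep : iIndepFun M ℙ)
    (Pi : ℕ → Ω → ℝ) (hPi : ∀ n ω, Pi n ω = ∏ k ∈ Finset.range n, M k ω)
    (x ρ : ℝ) (k : ℕ) :
    (ℙ : Measure Ω) ({ω | x < |Pi (2*k+1) ω| ∧ ∀ j, j < k → |Pi (2*j+1) ω| ≤ x}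
        ∩ {ω | ρ < |M (2*k+1) ω|})
      = ℙ {ω | x < |Pi (2*k+1) ω| ∧ ∀ j, j < k → |Pi (2*j+1) ω| ≤ x}
        * ℙ {ω | ρ < |M (2*k+1) ω|} := by
  classical
  set S : Finset ℕ := Finset.range (2*k+1) with hS
  set T : Finset ℕ := {2*k+1} with hT
  have hST : Disjoint S T := by
    simp [hS, hT, Finset.disjoint_singleton_right]
  have H := hindep.indepFun_finset S T hST hMmeas
  set φ : (↥S → ℝ) → (ℕ → ℝ) := fun v n => ∏ i : ↥S, (if (i : ℕ) < n then v i else 1) with hφ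
  have hφmeas : Measurable φ := by
    apply measurable_pi_lambda
    intro n
    apply Finset.measurable_prod
    intro i _
    by_cases h : (i : ℕ) < n <;> simp [h, measurable_pi_apply]
  have hmemT : 2*k+1 ∈ T := by simp [hT]
  set ψ : (↥T → ℝ) → ℝ := fun v => v ⟨2*k+1, hmemT⟩ with hψ
  have hψmeas : Measurable ψ := measurable_pi_apply _
  have H2 := H.comp hφmeas hψmeas
  have hφeq : ∀ (ω : Ω) (n : ℕ), n ≤ 2*k+1 → φ (fun i : ↥S => M i ω) n = Pi n ω := by
    intro ω n hn
    rw [hPi]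
    have h1 : φ (fun i : ↥S => M i ω) n = ∏ i ∈ S, (if i < n then M i ω else 1) :=
      Finset.prod_coe_sort S (fun i => if i < n then M i ω else 1)
    rw [h1, ← Finset.prod_filter]
    congr 1
    ext i
    simp only [Finset.mem_filter, Finset.mem_range, hS]
    omega
  set C : Set (ℕ → ℝ) := {w | x < |w (2*k+1)| ∧ ∀ j, j < k → |w (2*j+1)| ≤ x} with hCdef
  have hC : MeasurableSet C := by
    have : C = {w : ℕ → ℝ | x < |w (2*k+1)|} ∩ ⋂ j, ⋂ (_ : j < k), {w | |w (2*j+1)| ≤ x} := by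
      ext w; simp [hCdef, mem_iInter]
    rw [this]
    exact (measurableSet_lt measurable_const (measurable_pi_apply _).abs).inter
      (MeasurableSet.iInter fun j => MeasurableSet.iInter fun _ =>
        measurableSet_le (measurable_pi_apply _).abs measurable_const)
  set D : Set ℝ := {y | ρ < |y|} with hDdef
  have hD : MeasurableSet D := measurableSet_lt measurable_const measurable_abs
  have key := H2.measure_inter_preimage_eq_mul C D hC hD
  have e1 : (φ ∘ fun a (i : ↥S) => M i a) ⁻¹' C
      = {ω | x < |Pi (2*k+1) ω| ∧ ∀ j, j < k → |Pi (2*j+1) ω| ≤ x} := by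
    ext ω
    simp only [mem_preimage, Function.comp_apply, hCdef, mem_setOf_eq]
    rw [hφeq ω (2*k+1) le_rfl]
    constructor
    · rintro ⟨h1, h2⟩
      refine ⟨h1, fun j hj => ?_⟩
      have := h2 j hj
      rwa [hφeq ω (2*j+1) (by omega)] at this
    · rintro ⟨h1, h2⟩
      refine ⟨h1, fun j hj => ?_⟩
      rw [hφeq ω (2*j+1) (by omega)]
      exact h2 j hj
  have e2 : (ψ ∘ fun a (i : ↥T) => M i a) ⁻¹' D = {ω | ρ < |M (2*k+1) ω|} := rfl
  rw [e1, e2] at key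
  exact key

lemma aux_part1 {Ω : Type*} [MeasureSpace Ω] [IsProbabilityMeasure (ℙ : Measure Ω)]
    (M : ℕ → Ω → ℝ) (hMmeas : ∀ n, Measurable (M n))
    (hindep : iIndepFun M ℙ)
    (hident : ∀ n, IdentDistrib (M n) (M 0) ℙ ℙ)
    (Pi : ℕ → Ω → ℝ) (hPi : ∀ n ω, Pi n ω = ∏ k ∈ Finset.range n, M k ω)
    (ρ : ℝ) (hρ0 : 0 < ρ) (hρ1 : ρ < 1)
    (κ : ℝ) (hκ : κ = ((ℙ : Measure Ω) {ω | ρ < |M 0 ω|}).toReal) (hκpos : 0 < κ) :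
    ∀ x : ℝ, 0 < x →
      (ℙ : Measure Ω) {ω | ∃ k : ℕ, 2 * x < |Pi k ω|}
        ≤ ENNReal.ofReal (1 + κ⁻¹) *
          (ℙ : Measure Ω) {ω | ∃ k : ℕ, ρ * x < |Pi (2 * k) ω|} := by
  intro x hx
  have PiM : ∀ n, Measurable (Pi n) := by
    intro n
    have : Pi n = fun ω => ∏ k ∈ Finset.range n, M k ω := funext (hPi n)
    rw [this]
    exact Finset.measurable_prod _ fun i _ => hMmeas i
  set A : ℕ → Set Ω :=
    fun k => {ω | x < |Pi (2*k+1) ω| ∧ ∀ j, j < k → |Pi (2*j+1) ω| ≤ x} with hAdef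
  set B : ℕ → Set Ω := fun k => {ω | ρ < |M (2*k+1) ω|} with hBdef
  set O : Set Ω := {ω | ∃ k : ℕ, x < |Pi (2*k+1) ω|} with hOdef
  set Eρ : Set Ω := {ω | ∃ k : ℕ, ρ * x < |Pi (2 * k) ω|} with hEdef
  have hAmeas : ∀ k, MeasurableSet (A k) := by
    intro k
    have : A k = {ω | x < |Pi (2*k+1) ω|} ∩ ⋂ j, ⋂ (_ : j < k), {ω | |Pi (2*j+1) ω| ≤ x} := by
      ext ω; simp [hAdef, mem_iInter]
    rw [this]
    exact (measurableSet_lt measurable_const (PiM _).abs).inter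
      (MeasurableSet.iInter fun j => MeasurableSet.iInter fun _ =>
        measurableSet_le (PiM _).abs measurable_const)
  have hBmeas : ∀ k, MeasurableSet (B k) :=
    fun k => measurableSet_lt measurable_const (hMmeas _).abs
  -- disjointness
  have hAdisj' : ∀ k l, k < l → Disjoint (A k) (A l) := by
    intro k l hkl
    rw [Set.disjoint_left]
    rintro ω ⟨h1, _⟩ ⟨_, h2⟩
    exact absurd h1 (not_lt.2 (h2 k hkl))
  have hAdisj : Pairwise (Function.onFun Disjoint A) := by
    intro k l hkl
    rcases lt_or_gt_of_ne hkl with h | h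
    · exact hAdisj' k l h
    · exact (hAdisj' l k h).symm
  have hABdisj : Pairwise (Function.onFun Disjoint fun k => A k ∩ B k) := by
    intro k l hkl
    exact Disjoint.mono inter_subset_left inter_subset_left (hAdisj hkl)
  -- O = ⋃ A k
  have hOA : O = ⋃ k, A k := by
    ext ω
    simp only [hOdef, mem_setOf_eq, mem_iUnion, hAdef]
    constructor
    · intro h
      refine ⟨Nat.find h, Nat.find_spec h, fun j hj => not_lt.1 (Nat.find_min h hj)⟩
    · rintro ⟨k, h1, _⟩
      exact ⟨k, h1⟩
  -- κ as ENNReal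
  set κe : ℝ≥0∞ := (ℙ : Measure Ω) {ω | ρ < |M 0 ω|} with hκe
  have hκe_ofReal : ENNReal.ofReal κ = κe := by
    rw [hκ, ENNReal.ofReal_toReal (measure_ne_top _ _)]
  have hκe_ne : κe ≠ 0 := by
    intro h
    rw [hκ, h] at hκpos
    simp at hκpos
  have hκe_top : κe ≠ ∞ := measure_ne_top _ _
  have hBval : ∀ k, ℙ (B k) = κe := by
    intro k
    have hD : MeasurableSet {y : ℝ | ρ < |y|} :=
      measurableSet_lt measurable_const measurable_abs
    exact (hident (2*k+1)).measure_mem_eq hD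
  -- key sum bound : κe * ℙ O ≤ ℙ Eρ
  have hABsub : (⋃ k, A k ∩ B k) ⊆ Eρ := by
    rintro ω ⟨s, ⟨k, rfl⟩, ⟨hA1, _⟩, hB⟩
    refine ⟨k + 1, ?_⟩
    have hprod : Pi (2 * (k+1)) ω = Pi (2*k+1) ω * M (2*k+1) ω := by
      have : 2 * (k+1) = (2*k+1) + 1 := by ring
      rw [this, hPi, hPi, Finset.prod_range_succ]
    rw [hprod, abs_mul]
    have h1 : 0 < x := hx
    have h2 : x < |Pi (2*k+1) ω| := hA1
    have h3 : ρ < |M (2*k+1) ω| := hB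
    nlinarith [abs_nonneg (Pi (2*k+1) ω), abs_nonneg (M (2*k+1) ω)]
  have hkey : κe * ℙ O ≤ ℙ Eρ := by
    have h1 : κe * ℙ O = ∑' k, ℙ (A k ∩ B k) := by
      rw [hOA, measure_iUnion hAdisj hAmeas, ← ENNReal.tsum_mul_left]
      congr 1
      ext k
      rw [aux_indep M hMmeas hindep Pi hPi x ρ k, hBval k, mul_comm]
    rw [h1, ← measure_iUnion hABdisj (fun k => (hAmeas k).inter (hBmeas k))]
    exact measure_mono hABsub
  -- decomposition
  have hsub : {ω | ∃ k : ℕ, 2 * x < |Pi k ω|} ⊆ Eρ ∪ O := by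
    rintro ω ⟨k, hk⟩
    rcases Nat.even_or_odd k with ⟨j, hj⟩ | ⟨j, hj⟩
    · left
      refine ⟨j, ?_⟩
      have : 2 * j = k := by omega
      rw [this]
      nlinarith
    · right
      refine ⟨j, ?_⟩
      have : 2 * j + 1 = k := by omega
      rw [this]
      nlinarith
  have hOle : ℙ O ≤ κe⁻¹ * ℙ Eρ := by
    calc ℙ O = κe⁻¹ * (κe * ℙ O) := by
          rw [← mul_assoc, ENNReal.inv_mul_cancel hκe_ne hκe_top, one_mul]
      _ ≤ κe⁻¹ * ℙ Eρ := mul_le_mul_right hkey _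
  calc (ℙ : Measure Ω) {ω | ∃ k : ℕ, 2 * x < |Pi k ω|}
      ≤ ℙ (Eρ ∪ O) := measure_mono hsub
    _ ≤ ℙ Eρ + ℙ O := measure_union_le _ _
    _ ≤ ℙ Eρ + κe⁻¹ * ℙ Eρ := add_le_add_right hOle _
    _ = (1 + κe⁻¹) * ℙ Eρ := by rw [add_mul, one_mul]
    _ = ENNReal.ofReal (1 + κ⁻¹) * ℙ Eρ := by
        rw [ENNReal.ofReal_add (by norm_num) (by positivity), ENNReal.ofReal_one,
          ENNReal.ofReal_inv_of_pos hκpos, hκe_ofReal]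

/-- Key step in Lemma 3.1: with i.i.d. positive `Mₙ`, `Πₙ = M₁⋯Mₙ`, a nondegenerate
perpetuity `Z_∞` with `E f(|Z_∞|) < ∞` (`f` nondecreasing subadditive), `ρ ∈ (0,1)`
with `κ = P(|M| > ρ) > 0`, and the tail bound
`P(sup_{k≥0}|Π_{2k}| > x) ≤ 8 P(|Z_∞| > c x)`, one has
`P(sup_{k≥0}|Π_k| > 2x) ≤ (1 + κ⁻¹) P(sup_{k≥0}|Π_{2k}| > ρ x)` for all `x > 0`,
and consequently `E f(sup_{n≥0}|Πₙ|) < ∞`. -/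
theorem sup_Pi_moment
    {Ω : Type*} [MeasureSpace Ω] [IsProbabilityMeasure (ℙ : Measure Ω)]
    (M : ℕ → Ω → ℝ) (hMmeas : ∀ n, Measurable (M n))
    (hindep : iIndepFun M ℙ)
    (hident : ∀ n, IdentDistrib (M n) (M 0) ℙ ℙ)
    (hMpos : ∀ᵐ ω ∂(ℙ : Measure Ω), 0 < M 0 ω)
    (Pi : ℕ → Ω → ℝ) (hPi : ∀ n ω, Pi n ω = ∏ k ∈ Finset.range n, M k ω)
    (Z : Ω → ℝ)
    (hnondeg : ∀ cst : ℝ, (ℙ : Measure Ω) {ω | Z ω = cst} < 1)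
    (f : ℝ → ℝ) (Cf : ℝ)
    (hf_mono : MonotoneOn f (Ici (0:ℝ)))
    (hf_nonneg : ∀ x ∈ Ici (0:ℝ), 0 ≤ f x)
    (hf0 : f 0 = 0)
    (hf_add : ∀ x ∈ Ici (0:ℝ), ∀ y ∈ Ici (0:ℝ), f (x + y) ≤ f x + f y)
    (hf_sub : ∀ x ∈ Ici (0:ℝ), ∀ y ∈ Ici (0:ℝ), f (x * y) ≤ Cf * (f x + f y))
    (hZint : Integrable (fun ω => f |Z ω|) ℙ)
    (ρ : ℝ) (hρ0 : 0 < ρ) (hρ1 : ρ < 1)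
    (κ : ℝ) (hκ : κ = ((ℙ : Measure Ω) {ω | ρ < |M 0 ω|}).toReal) (hκpos : 0 < κ)
    (c : ℝ) (hc0 : 0 < c) (hc1 : c < 1)
    (htail : ∀ x : ℝ, 0 < x →
      (ℙ : Measure Ω) {ω | ∃ k : ℕ, x < |Pi (2 * k) ω|}
        ≤ 8 * (ℙ : Measure Ω) {ω | c * x < |Z ω|}) :
    (∀ x : ℝ, 0 < x →
      (ℙ : Measure Ω) {ω | ∃ k : ℕ, 2 * x < |Pi k ω|}
        ≤ ENNReal.ofReal (1 + κ⁻¹) *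
          (ℙ : Measure Ω) {ω | ∃ k : ℕ, ρ * x < |Pi (2 * k) ω|}) ∧
    Integrable (fun ω => f (⨆ n : ℕ, |Pi n ω|)) ℙ := by
  refine ⟨aux_part1 M hMmeas hindep hident Pi hPi ρ hρ0 hρ1 κ hκ hκpos, ?_⟩
  have part1 := aux_part1 M hMmeas hindep hident Pi hPi ρ hρ0 hρ1 κ hκ hκpos
  have PiM : ∀ n, Measurable (Pi n) := by
    intro n
    have : Pi n = fun ω => ∏ k ∈ Finset.range n, M k ω := funext (hPi n)
    rw [this]
    exact Finset.measurable_prod _ fun i _ => hMmeas i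
  set S : Ω → ℝ := fun ω => ⨆ n : ℕ, |Pi n ω| with hSdef
  have hSmeas : Measurable S := Measurable.iSup fun n => (PiM n).abs
  have hS0 : ∀ ω, 0 ≤ S ω := fun ω => Real.iSup_nonneg fun n => abs_nonneg _
  set g : ℝ → ℝ := fun r => f (max r 0) with hgdef
  have hg_mono : Monotone g := by
    intro a b hab
    exact hf_mono (mem_Ici.2 (le_max_right a 0)) (mem_Ici.2 (le_max_right b 0))
      (max_le_max hab le_rfl)
  have hg_meas : Measurable g := hg_mono.measurable
  have hgS : ∀ ω, f (S ω) = g (S ω) := fun ω => by rw [hgdef]; simp [max_eq_left (hS0 ω)]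
  have hgS_nonneg : ∀ ω, 0 ≤ g (S ω) := fun ω => by
    rw [← hgS]; exact hf_nonneg _ (mem_Ici.2 (hS0 ω))
  -- constants
  set K : ℝ := 2 / (c * ρ) with hKdef
  have hcρ : 0 < c * ρ := mul_pos hc0 hρ0
  have hK : 0 < K := by positivity
  set C₀ : ℝ≥0∞ := ENNReal.ofReal (1 + κ⁻¹) * 8 with hC₀
  have hC₀top : C₀ ≠ ∞ := by
    rw [hC₀]; exact ENNReal.mul_ne_top ENNReal.ofReal_ne_top (by norm_num)
  -- tail bound for S
  have htailS : ∀ v : ℝ, 0 < v → ℙ {ω | v < S ω} ≤ C₀ * ℙ {ω | v < K * |Z ω|} := by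
    intro v hv
    have h1 : {ω | v < S ω} ⊆ {ω | ∃ k : ℕ, 2 * (v/2) < |Pi k ω|} := by
      intro ω hω
      simp only [mem_setOf_eq] at hω
      by_contra h
      simp only [mem_setOf_eq, not_exists, not_lt] at h
      have : S ω ≤ v := ciSup_le fun n => by have := h n; linarith
      linarith
    have h2 := part1 (v/2) (by linarith)
    have h3 := htail (ρ * (v/2)) (by positivity)
    have h4 : {ω | c * (ρ * (v/2)) < |Z ω|} = {ω | v < K * |Z ω|} := by
      ext ω
      simp only [mem_setOf_eq]
      rw [hKdef, div_mul_eq_mul_div, lt_div_iff₀ hcρ]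
      constructor <;> intro <;> nlinarith
    calc ℙ {ω | v < S ω} ≤ ℙ {ω | ∃ k : ℕ, 2 * (v/2) < |Pi k ω|} := measure_mono h1
      _ ≤ ENNReal.ofReal (1 + κ⁻¹) * ℙ {ω | ∃ k : ℕ, ρ * (v/2) < |Pi (2*k) ω|} := h2
      _ ≤ ENNReal.ofReal (1 + κ⁻¹) * (8 * ℙ {ω | c * (ρ * (v/2)) < |Z ω|}) :=
          mul_le_mul_right h3 _
      _ = C₀ * ℙ {ω | v < K * |Z ω|} := by rw [h4, hC₀, mul_assoc]
  -- dominating function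
  set D : ℝ := max Cf 0 with hDdef
  have hD0 : 0 ≤ D := le_max_right _ _
  set W : Ω → ℝ := fun ω => D * (f (2*K) + f |Z ω|) with hWdef
  have hfZ_nonneg : ∀ ω, 0 ≤ f |Z ω| := fun ω => hf_nonneg _ (mem_Ici.2 (abs_nonneg _))
  have hf2K_nonneg : 0 ≤ f (2*K) := hf_nonneg _ (mem_Ici.2 (by linarith))
  have hW_nonneg : ∀ ω, 0 ≤ W ω := fun ω => by
    rw [hWdef]
    have := hfZ_nonneg ω
    positivity
  have hWmeas : AEMeasurable W ℙ :=
    ((aemeasurable_const.add hZint.aestronglyMeasurable.aemeasurable).const_mul D)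
  have hfKZ_le_W : ∀ ω, f (2 * K * |Z ω|) ≤ W ω := by
    intro ω
    calc f (2 * K * |Z ω|) ≤ Cf * (f (2*K) + f |Z ω|) :=
          hf_sub _ (mem_Ici.2 (by linarith)) _ (mem_Ici.2 (abs_nonneg _))
      _ ≤ D * (f (2*K) + f |Z ω|) := by
          apply mul_le_mul_of_nonneg_right (le_max_left _ _)
          have := hfZ_nonneg ω
          linarith [hf2K_nonneg]
  -- nondegeneracy constant
  set δ : ℝ≥0∞ := ℙ {ω | Z ω ≠ 0} with hδdef
  have hδ_ne : δ ≠ 0 := by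
    intro h
    have h1 : (1 : ℝ≥0∞) = ℙ (univ : Set Ω) := (measure_univ).symm
    have h2 : (univ : Set Ω) ⊆ {ω | Z ω = 0} ∪ {ω | Z ω ≠ 0} := by
      intro ω _
      by_cases hz : Z ω = 0
      · exact Or.inl hz
      · exact Or.inr hz
    have h3 : (1:ℝ≥0∞) ≤ ℙ {ω | Z ω = 0} + ℙ {ω | Z ω ≠ 0} := by
      rw [h1]
      exact le_trans (measure_mono h2) (measure_union_le _ _)
    rw [hδdef] at h
    rw [h, add_zero] at h3
    exact absurd (hnondeg 0) (not_lt.2 h3)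
  have hδ_top : δ ≠ ∞ := measure_ne_top _ _
  set C' : ℝ≥0∞ := C₀ + δ⁻¹ with hC'
  have hC'top : C' ≠ ∞ := by
    rw [hC']
    exact ENNReal.add_ne_top.2 ⟨hC₀top, ENNReal.inv_ne_top.2 hδ_ne⟩
  -- main tail comparison
  have hmain : ∀ t : ℝ, 0 < t → ℙ {ω | t < g (S ω)} ≤ C' * ℙ {ω | t ≤ W ω} := by
    intro t ht
    have hfS : ∀ ω, g (S ω) = f (S ω) := fun ω => (hgS ω).symm
    set Q : Set ℝ := {y | 0 ≤ y ∧ f y ≤ t} with hQdef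
    have hQ0 : (0:ℝ) ∈ Q := ⟨le_rfl, by rw [hf0]; linarith⟩
    by_cases hbdd : BddAbove Q
    · set y' : ℝ := sSup Q with hy'
      have hy'0 : 0 ≤ y' := le_csSup hbdd hQ0
      have hgt : ∀ z : ℝ, y' < z → 0 ≤ z → t < f z := by
        intro z hz hz0
        by_contra h
        push_neg at h
        have : z ∈ Q := ⟨hz0, h⟩
        exact absurd (le_csSup hbdd this) (not_le.2 hz)
      rcases eq_or_lt_of_le hy'0 with hy'eq | hy'pos
      · -- y' = 0 case
        have hZW : {ω | Z ω ≠ 0} ⊆ {ω | t ≤ W ω} := by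
          intro ω hω
          have hz : y' < 2 * K * |Z ω| := by
            rw [← hy'eq]
            exact mul_pos (by linarith) (abs_pos.2 hω)
          have := hgt _ hz (by nlinarith [abs_nonneg (Z ω)])
          exact le_trans (le_of_lt this) (hfKZ_le_W ω)
        calc ℙ {ω | t < g (S ω)} ≤ 1 := prob_le_one
          _ = δ⁻¹ * δ := (ENNReal.inv_mul_cancel hδ_ne hδ_top).symm
          _ ≤ δ⁻¹ * ℙ {ω | t ≤ W ω} := mul_le_mul_right (measure_mono hZW) _
          _ ≤ C' * ℙ {ω | t ≤ W ω} := mul_le_mul_left le_add_self _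
      · -- y' > 0 case
        have hy2 : f (y'/2) ≤ t := by
          obtain ⟨z, hzQ, hzgt⟩ := exists_lt_of_lt_csSup ⟨0, hQ0⟩ (half_lt_self hy'pos)
          calc f (y'/2) ≤ f z :=
              hf_mono (mem_Ici.2 (by linarith)) (mem_Ici.2 hzQ.1) (le_of_lt hzgt)
            _ ≤ t := hzQ.2
        have h1 : {ω | t < g (S ω)} ⊆ {ω | y'/2 < S ω} := by
          intro ω hω
          simp only [mem_setOf_eq] at hω ⊢
          by_contra h
          push_neg at h
          have : f (S ω) ≤ f (y'/2) :=
            hf_mono (mem_Ici.2 (hS0 ω)) (mem_Ici.2 (by linarith)) h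
          rw [hfS ω] at hω
          linarith
        have h2 : {ω | y'/2 < K * |Z ω|} ⊆ {ω | t ≤ W ω} := by
          intro ω hω
          simp only [mem_setOf_eq] at hω ⊢
          have hz : y' < 2 * K * |Z ω| := by linarith
          have := hgt _ hz (by nlinarith [abs_nonneg (Z ω)])
          exact le_trans (le_of_lt this) (hfKZ_le_W ω)
        calc ℙ {ω | t < g (S ω)} ≤ ℙ {ω | y'/2 < S ω} := measure_mono h1
          _ ≤ C₀ * ℙ {ω | y'/2 < K * |Z ω|} := htailS _ (by linarith)
          _ ≤ C₀ * ℙ {ω | t ≤ W ω} := mul_le_mul_right (measure_mono h2) _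
          _ ≤ C' * ℙ {ω | t ≤ W ω} := mul_le_mul_left le_self_add _
    · -- Q unbounded: f ≤ t on [0,∞)
      have hflet : ∀ y : ℝ, 0 ≤ y → f y ≤ t := by
        intro y hy
        obtain ⟨z, hzQ, hzy⟩ := not_bddAbove_iff.1 hbdd y
        exact le_trans (hf_mono (mem_Ici.2 hy) (mem_Ici.2 hzQ.1) (le_of_lt hzy)) hzQ.2
      have : {ω | t < g (S ω)} = ∅ := by
        ext ω
        simp only [mem_setOf_eq, mem_empty_iff_false, iff_false, not_lt]
        rw [← hgS]
        exact hflet _ (hS0 ω)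
      rw [this]
      simp
  -- conclude integrability
  have hmeasW : ∀ᵐ ω ∂(ℙ : Measure Ω), 0 ≤ W ω := Eventually.of_forall hW_nonneg
  have hlintW : ∫⁻ ω, ENNReal.ofReal (W ω) ∂ℙ < ∞ := by
    have hbound : ∀ ω, ENNReal.ofReal (W ω) ≤
        ENNReal.ofReal D * (ENNReal.ofReal (f (2*K)) + ENNReal.ofReal (f |Z ω|)) := by
      intro ω
      rw [← ENNReal.ofReal_add hf2K_nonneg (hfZ_nonneg ω), ← ENNReal.ofReal_mul hD0]
    calc ∫⁻ ω, ENNReal.ofReal (W ω) ∂ℙ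
        ≤ ∫⁻ ω, ENNReal.ofReal D * (ENNReal.ofReal (f (2*K)) + ENNReal.ofReal (f |Z ω|)) ∂ℙ :=
          lintegral_mono hbound
      _ = ENNReal.ofReal D * ∫⁻ ω, (ENNReal.ofReal (f (2*K)) + ENNReal.ofReal (f |Z ω|)) ∂ℙ :=
          lintegral_const_mul' _ _ ENNReal.ofReal_ne_top
      _ < ∞ := by
          rw [lintegral_add_left measurable_const, lintegral_const]
          have hfZlt : ∫⁻ ω, ENNReal.ofReal (f |Z ω|) ∂ℙ < ∞ := by
            have := hZint.2
            rw [hasFiniteIntegral_iff_norm] at this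
            calc ∫⁻ ω, ENNReal.ofReal (f |Z ω|) ∂ℙ
                ≤ ∫⁻ ω, ENNReal.ofReal ‖f |Z ω|‖ ∂ℙ :=
                  lintegral_mono fun ω => ENNReal.ofReal_le_ofReal (le_abs_self _)
              _ < ∞ := this
          exact ENNReal.mul_lt_top ENNReal.ofReal_lt_top
            (ENNReal.add_lt_top.2
              ⟨ENNReal.mul_lt_top ENNReal.ofReal_lt_top (measure_lt_top _ _), hfZlt⟩)
  have hgSmeas : AEMeasurable (fun ω => g (S ω)) ℙ := (hg_meas.comp hSmeas).aemeasurable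
  have key : ∫⁻ ω, ENNReal.ofReal (g (S ω)) ∂ℙ < ∞ := by
    rw [lintegral_eq_lintegral_meas_lt ℙ (Eventually.of_forall hgS_nonneg) hgSmeas]
    have hWle : ∫⁻ t in Ioi (0:ℝ), ℙ {ω | t < g (S ω)} ≤
        ∫⁻ t in Ioi (0:ℝ), C' * ℙ {ω | t ≤ W ω} := by
      apply setLIntegral_mono' measurableSet_Ioi
      intro t ht
      exact hmain t ht
    calc ∫⁻ t in Ioi (0:ℝ), ℙ {ω | t < g (S ω)}
        ≤ ∫⁻ t in Ioi (0:ℝ), C' * ℙ {ω | t ≤ W ω} := hWle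
      _ = C' * ∫⁻ t in Ioi (0:ℝ), ℙ {ω | t ≤ W ω} :=
          lintegral_const_mul' _ _ hC'top
      _ = C' * ∫⁻ ω, ENNReal.ofReal (W ω) ∂ℙ := by
          rw [lintegral_eq_lintegral_meas_le ℙ hmeasW hWmeas]
      _ < ∞ := ENNReal.mul_lt_top hC'top.lt_top hlintW
  constructor
  · exact ((hg_meas.comp hSmeas).aestronglyMeasurable).congr
      (Eventually.of_forall fun ω => (hgS ω).symm)
  · rw [hasFiniteIntegral_iff_norm]
    have : ∀ ω, ENNReal.ofReal ‖f (S ω)‖ = ENNReal.ofReal (g (S ω)) := by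
      intro ω
      rw [hgS ω, Real.norm_eq_abs, abs_of_nonneg (hgS_nonneg ω)]
    refine lt_of_eq_of_lt (lintegral_congr fun ω => ?_) key
    exact this ω
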